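/- Let M be a Puiseux monoid such that 0 is not a limit point of M \\ {0}. Then {2} belongs to the system of sets of lengths of M, i.e., there exists x ∈ M whose set of lengths is exactly {2}. -/

import Mathlib

open scoped BigOperators

/-- A Puiseux monoid: an additive submonoid of ℚ consisting of nonnegative elements. -/
def IsPuiseux (M : AddSubmonoid ℚ) : Prop := ∀ x ∈ M, (0:ℚ) ≤ x

/-- `a` is an atom of the submonoid `S`. -/
def IsAtomOf {α : Type*} [AddCommMonoid α] (S : AddSubmonoid α) (a : α) : Prop :=
  a ∈ S ∧ a ≠ 0 ∧ ∀ u v : α, u ∈ S → v ∈ S → a = u + v → u = 0 ∨ v = 0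

/-- `x` has a factorization of length `n` into atoms of `S`. -/
def IsLengthOf {α : Type*} [AddCommMonoid α] (S : AddSubmonoid α) (x : α) (n : ℕ) : Prop :=
  ∃ f : Fin n → α, (∀ i, IsAtomOf S (f i)) ∧ x = ∑ i, f i

/-- The set of lengths of `x` in `S`. -/
def lengthsOf {α : Type*} [AddCommMonoid α] (S : AddSubmonoid α) (x : α) : Set ℕ :=
  {n | IsLengthOf S x n}

/-- `S` is atomic: every nonzero element is a finite sum of atoms. -/
def AtomicM {α : Type*} [AddCommMonoid α] (S : AddSubmonoid α) : Prop :=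
  ∀ x ∈ S, x ≠ 0 → ∃ n : ℕ, IsLengthOf S x n

/-- The system of sets of lengths of `M`. -/
def systemOfLengths (M : AddSubmonoid ℚ) : Set (Set ℕ) :=
  {S | ∃ x ∈ M, lengthsOf M x = S}

/-- The elementary Puiseux monoid ⟨1/p : p prime⟩. -/
def elemPM : AddSubmonoid ℚ :=
  AddSubmonoid.closure {q : ℚ | ∃ p : ℕ, p.Prime ∧ q = 1 / p}

/-- If 0 is not a limit point of `M \ {0}` for a nontrivial Puiseux monoid `M`,
then `{2}` belongs to the system of sets of lengths of `M`. -/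
theorem stmt5 (M : AddSubmonoid ℚ) (hP : IsPuiseux M) (hnt : M ≠ ⊥)
    (h0 : ¬ AccPt (0:ℚ) (Filter.principal ((M : Set ℚ) \ {0}))) :
    ∃ x ∈ M, lengthsOf M x = {2} := by
  rw [accPt_iff_nhds] at h0
  push_neg at h0
  obtain ⟨U, hU, hUy⟩ := h0
  obtain ⟨ε, hε, hball⟩ := Metric.mem_nhds_iff.mp hU
  -- every nonzero element of M is ≥ ε (as a real)
  have hlbq : ∀ q : ℚ, q ∈ M → q ≠ 0 → ε ≤ (q:ℝ) := by
    intro q hq hq0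
    by_contra h
    push_neg at h
    have hq_nonneg : (0:ℚ) ≤ q := hP q hq
    have : q ∈ Metric.ball (0:ℚ) ε := by
      rw [Metric.mem_ball, Rat.dist_eq]
      simpa [abs_of_nonneg (show (0:ℝ) ≤ (q:ℝ) by exact_mod_cast hq_nonneg)] using h
    exact hq0 (hUy q ⟨hball this, hq, hq0⟩)
  set A : Set ℝ := (fun q : ℚ => (q:ℝ)) '' {q : ℚ | q ∈ M ∧ q ≠ 0} with hA
  have hAne : A.Nonempty := by
    have : ∃ q : ℚ, q ∈ M ∧ q ≠ 0 := by
      by_contra hc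
      push_neg at hc
      apply hnt
      ext x
      simp only [AddSubmonoid.mem_bot]
      exact ⟨fun hx => by by_contra hz; exact hz (hc x hx), fun hx => hx ▸ M.zero_mem⟩
    obtain ⟨q, hqM, hq0⟩ := this
    exact ⟨(q:ℝ), q, ⟨hqM, hq0⟩, rfl⟩
  have hAbdd : BddBelow A := ⟨ε, by rintro r ⟨q, ⟨hq, hq0⟩, rfl⟩; exact hlbq q hq hq0⟩
  set d : ℝ := sInf A with hd
  have hd_pos : 0 < d :=
    lt_of_lt_of_le hε (le_csInf hAne (by rintro r ⟨q, ⟨hq, hq0⟩, rfl⟩; exact hlbq q hq hq0))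
  have hd_le : ∀ x : ℚ, x ∈ M → x ≠ 0 → d ≤ (x:ℝ) := fun x hx hx0 =>
    csInf_le hAbdd ⟨x, ⟨hx, hx0⟩, rfl⟩
  obtain ⟨r, ⟨q, ⟨hqM, hq0⟩, rfl⟩, hr⟩ : ∃ r ∈ A, r < 3/2 * d :=
    (csInf_lt_iff hAbdd hAne).mp (by linarith)
  have hq_pos : (0:ℚ) < q := lt_of_le_of_ne (hP q hqM) (Ne.symm hq0)
  -- q is an atom
  have hatom : IsAtomOf M q := by
    refine ⟨hqM, hq0, fun u v hu hv huv => ?_⟩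
    by_contra hcon
    push_neg at hcon
    have h1 := hd_le u hu hcon.1
    have h2 := hd_le v hv hcon.2
    have hqr : (q:ℝ) = (u:ℝ) + (v:ℝ) := by exact_mod_cast congrArg (fun t : ℚ => (t:ℝ)) huv
    linarith
  refine ⟨q + q, M.add_mem hqM hqM, ?_⟩
  ext n
  simp only [lengthsOf, Set.mem_setOf_eq, Set.mem_singleton_iff]
  constructor
  · rintro ⟨f, hf, hsum⟩
    -- each atom is ≥ d, sum is 2q < 3d, so n < 3
    have hsumR : (q:ℝ) + (q:ℝ) = ∑ i : Fin n, ((f i : ℚ) : ℝ) := by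
      have := congrArg (fun t : ℚ => (t:ℝ)) hsum
      push_cast at this ⊢
      exact this
    have hge : (n : ℝ) * d ≤ ∑ i : Fin n, ((f i : ℚ) : ℝ) := by
      calc (n : ℝ) * d = (Finset.univ : Finset (Fin n)).card • d := by
            simp [nsmul_eq_mul]
        _ ≤ ∑ i : Fin n, ((f i : ℚ) : ℝ) := Finset.card_nsmul_le_sum _ _ _
            (fun i _ => hd_le (f i) (hf i).1 (hf i).2.1)
    have hn3 : (n : ℝ) * d < 3 * d := by linarith
    have hn3' : n < 3 := by
      have := (mul_lt_mul_iff_of_pos_right hd_pos).mp hn3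
      exact_mod_cast this
    have hn0 : n ≠ 0 := by
      rintro rfl
      simp at hsum
      linarith
    have hn1 : n ≠ 1 := by
      rintro rfl
      have : q + q = f 0 := by simpa using hsum
      rcases (hf 0).2.2 q q hqM hqM this.symm with h | h <;> exact hq0 h
    omega
  · rintro rfl
    refine ⟨fun _ => q, fun _ => hatom, ?_⟩
    simp [Finset.sum_const, two_nsmul]
    ring
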